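/- Let V be a metrizable locally convex real topological vector space. If the topological dual V*, equipped with the topology of uniform convergence on compact subsets of V (the compact-open topology), is metrizable, then V is finite-dimensional. -/

import Mathlib

open Set Filter Topology Pointwise

/-- A T2 topological vector space over `ℝ` with a totally bounded neighborhood of zero
is finite dimensional. -/
theorem aux_fd_of_totallyBounded_nhds (V : Type*) [AddCommGroup V] [Module ℝ V]
    [UniformSpace V] [IsUniformAddGroup V] [ContinuousSMul ℝ V] [T2Space V]
    {U : Set V} (hU : U ∈ 𝓝 (0 : V)) (htb : TotallyBounded U) :
    FiniteDimensional ℝ V := by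
  have h2 : ((2:ℝ)⁻¹) • U ∈ 𝓝 (0:V) := by
    rw [set_smul_mem_nhds_zero_iff (by norm_num : ((2:ℝ)⁻¹) ≠ 0)]
    exact hU
  obtain ⟨t, htf, hts⟩ := totallyBounded_iff_subset_finite_iUnion_nhds_zero.mp htb _ h2
  set M := Submodule.span ℝ t with hMdef
  haveI : FiniteDimensional ℝ M := FiniteDimensional.span_of_finite ℝ htf
  have hMc : IsClosed (M : Set V) := Submodule.closed_of_finiteDimensional M
  have hstep : U ⊆ (M : Set V) + (2:ℝ)⁻¹ • U := by
    refine hts.trans ?_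
    intro x hx
    simp only [mem_iUnion] at hx
    obtain ⟨y, hy, hxy⟩ := hx
    obtain ⟨b, hb, rfl⟩ := hxy
    exact Set.mem_add.mpr ⟨y, Submodule.subset_span hy, b, hb, rfl⟩
  have hiter : ∀ n : ℕ, U ⊆ (M : Set V) + ((2:ℝ)⁻¹ ^ n) • U := by
    intro n
    induction n with
    | zero =>
      intro x hx
      rw [pow_zero, one_smul]
      exact Set.mem_add.mpr ⟨0, M.zero_mem, x, hx, by simp⟩
    | succ n ih =>
      refine hstep.trans ?_
      intro x hx
      obtain ⟨m, hm, w, hw, rfl⟩ := Set.mem_add.mp hx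
      obtain ⟨v, hv, rfl⟩ := hw
      obtain ⟨m2, hm2, w2, hw2, rfl⟩ := Set.mem_add.mp (ih hv)
      obtain ⟨v2, hv2, rfl⟩ := hw2
      refine Set.mem_add.mpr ⟨m + (2:ℝ)⁻¹ • m2, M.add_mem hm (M.smul_mem _ hm2),
        ((2:ℝ)⁻¹ ^ (n+1)) • v2, Set.smul_mem_smul_set hv2, ?_⟩
      module
  have hcl : U ⊆ (M : Set V) := by
    intro x hx
    rw [← hMc.closure_eq]
    have hex : ∀ n : ℕ, ∃ m ∈ (M : Set V), ∃ u ∈ U, m + ((2:ℝ)⁻¹ ^ n) • u = x := by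
      intro n
      obtain ⟨m, hm, w, hw, h⟩ := Set.mem_add.mp (hiter n hx)
      obtain ⟨u, hu, rfl⟩ := hw
      exact ⟨m, hm, u, hu, h⟩
    choose m hm u hu hmu using hex
    have hb : Bornology.IsVonNBounded ℝ U := htb.isVonNBounded ℝ
    have h0 : Tendsto (fun n : ℕ => ((2:ℝ)⁻¹ ^ n) • u n) atTop (𝓝 0) := by
      have := hb.smul_tendsto_zero (ε := fun n : ℕ => ((2:ℝ)⁻¹ ^ n)) (x := u)
        (Eventually.of_forall hu)
        (tendsto_pow_atTop_nhds_zero_of_lt_one (by norm_num) (by norm_num))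
      exact this
    have hmx : Tendsto m atTop (𝓝 x) := by
      have hme : m = fun n => x - ((2:ℝ)⁻¹ ^ n) • u n := by
        funext n
        exact (eq_sub_of_add_eq (hmu n))
      rw [hme]
      simpa using tendsto_const_nhds.sub h0
    exact mem_closure_of_tendsto hmx (Eventually.of_forall hm)
  have htop : M = ⊤ := by
    rw [eq_top_iff]
    intro x _
    have hcont : Tendsto (fun c : ℝ => c • x) (𝓝[≠] 0) (𝓝 0) := by
      have : Tendsto (fun c : ℝ => c • x) (𝓝 0) (𝓝 ((0:ℝ) • x)) :=
        (continuous_id.smul continuous_const).tendsto 0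
      simpa using this.mono_left nhdsWithin_le_nhds
    have h1 : ∀ᶠ c : ℝ in 𝓝[≠] 0, c • x ∈ U := hcont.eventually_mem hU
    obtain ⟨c, hcU, hc0⟩ := (h1.and eventually_mem_nhdsWithin).exists
    have : x = c⁻¹ • (c • x) := (inv_smul_smul₀ hc0 x).symm
    rw [this]
    exact M.smul_mem _ (hcl hcU)
  have : FiniteDimensional ℝ (⊤ : Submodule ℝ V) := htop ▸ ‹FiniteDimensional ℝ M›
  exact Submodule.topEquiv.finiteDimensional


/-- Let `V` be a metrizable locally convex real topological vector space.  If the dual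
`V*`, equipped with the topology of uniform convergence on compact subsets of `V`
(here `UniformConvergenceCLM (RingHom.id ℝ) ℝ {K | IsCompact K}`), is metrizable, then
`V` is finite-dimensional. -/
theorem stmt6 (V : Type*)
    [AddCommGroup V] [Module ℝ V] [TopologicalSpace V] [IsTopologicalAddGroup V]
    [ContinuousSMul ℝ V] [LocallyConvexSpace ℝ V] [TopologicalSpace.MetrizableSpace V]
    (hmetr : TopologicalSpace.MetrizableSpace
      (UniformConvergenceCLM (RingHom.id ℝ) ℝ {K : Set V | IsCompact K})) :
    FiniteDimensional ℝ V := by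
  haveI := hmetr
  set 𝔖 : Set (Set V) := {K : Set V | IsCompact K} with h𝔖
  have h𝔖₁ : 𝔖.Nonempty := ⟨∅, isCompact_empty⟩
  have h𝔖₂ : DirectedOn (· ⊆ ·) 𝔖 :=
    fun A hA B hB => ⟨A ∪ B, hA.union hB, subset_union_left, subset_union_right⟩
  have hB := UniformConvergenceCLM.hasBasis_nhds_zero (RingHom.id ℝ) ℝ 𝔖 h𝔖₁ h𝔖₂
  obtain ⟨s, hsp, hsb⟩ := hB.exists_antitone_subbasis
  -- choose radii
  have hball : ∀ n : ℕ, ∃ e : ℝ, 0 < e ∧ Metric.closedBall (0:ℝ) e ⊆ (s n).2 := by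
    intro n
    obtain ⟨e, he, hsub⟩ := Metric.nhds_basis_closedBall.mem_iff.mp (hsp n).2
    exact ⟨e, he, hsub⟩
  choose ε hε hεsub using hball
  -- the candidate totally bounded sets
  set D : ℕ → Set V := fun n =>
    closure (absConvexHull ℝ (insert (0:V) ((ε n)⁻¹ • (s n).1))) with hD
  have h0D : ∀ n, (0:V) ∈ D n :=
    fun n => subset_closure (subset_absConvexHull (mem_insert 0 _))
  -- key step : every compact set is contained in some D n
  have key : ∀ K : Set V, IsCompact K → ∃ n, K ⊆ D n := by
    intro K hK
    have hmem : {f : UniformConvergenceCLM (RingHom.id ℝ) ℝ 𝔖 |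
        ∀ x ∈ K, f x ∈ Ioo (-1:ℝ) 1} ∈ 𝓝 (0 : UniformConvergenceCLM (RingHom.id ℝ) ℝ 𝔖) :=
      hB.mem_iff.mpr ⟨(K, Ioo (-1:ℝ) 1),
        ⟨hK, Ioo_mem_nhds (by norm_num) (by norm_num)⟩, subset_rfl⟩
    obtain ⟨n, -, hn⟩ := hsb.toHasBasis.mem_iff.mp hmem
    refine ⟨n, fun v hv => ?_⟩
    by_contra hvD
    have hDconv : Convex ℝ (D n) := (convex_absConvexHull).closure
    obtain ⟨f, u, hfu, huv⟩ :=
      geometric_hahn_banach_closed_point hDconv isClosed_closure hvD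
    have hu0 : (0:ℝ) < u := by simpa using hfu 0 (h0D n)
    have hbal : Balanced ℝ (D n) := (balanced_absConvexHull).closure
    have habs : ∀ y ∈ D n, |f y| < u := by
      intro y hy
      have hneg : -y ∈ D n := by
        have := hbal (-1 : ℝ) (by norm_num) ⟨y, hy, rfl⟩
        simpa using this
      have h1 := hfu y hy
      have h2 := hfu (-y) hneg
      rw [map_neg] at h2
      rw [abs_lt]
      constructor <;> linarith
    set g : V →L[ℝ] ℝ := u⁻¹ • f with hg
    have hgB : g ∈ {f' : UniformConvergenceCLM (RingHom.id ℝ) ℝ 𝔖 |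
        ∀ x ∈ (s n).1, f' x ∈ (s n).2} := by
      intro z hz
      apply hεsub n
      rw [Metric.mem_closedBall, dist_zero_right, Real.norm_eq_abs]
      have hzD : (ε n)⁻¹ • z ∈ D n :=
        subset_closure (subset_absConvexHull (mem_insert_of_mem _ ⟨z, hz, rfl⟩))
      have h1 : |f ((ε n)⁻¹ • z)| < u := habs _ hzD
      rw [map_smul, smul_eq_mul, abs_mul, abs_inv, abs_of_pos (hε n)] at h1
      have h2 : |f z| < u * ε n := by
        have hεn := hε n
        rw [inv_mul_lt_iff₀ hεn] at h1
        linarith [h1]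
      have : g z = u⁻¹ * f z := rfl
      change |u⁻¹ * f z| ≤ ε n
      rw [abs_mul, abs_inv, abs_of_pos hu0]
      rw [inv_mul_le_iff₀ hu0]
      nlinarith [abs_nonneg (f z)]
    have hgK := hn hgB v hv
    have hgv : g v ≤ 1 := le_of_lt hgK.2
    have : (1:ℝ) < g v := by
      have : g v = u⁻¹ * f v := rfl
      rw [this, ← inv_mul_cancel₀ hu0.ne']
      exact mul_lt_mul_of_pos_left huv (inv_pos.mpr hu0)
    linarith
  -- switch to the uniform structure on V
  letI : UniformSpace V := IsTopologicalAddGroup.rightUniformSpace V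
  haveI : IsUniformAddGroup V := isUniformAddGroup_of_addCommGroup
  have htb : ∀ n, TotallyBounded (D n) := by
    intro n
    have h1 : IsCompact ((ε n)⁻¹ • (s n).1) := (hsp n).1.smul _
    have h2 : IsCompact (insert (0:V) ((ε n)⁻¹ • (s n).1)) := h1.insert 0
    exact (totallyBounded_absConvexHull.mpr h2.totallyBounded).closure
  obtain ⟨UU, hUU⟩ := (𝓝 (0:V)).exists_antitone_basis
  have hex : ∃ n, UU n ⊆ D n := by
    by_contra h
    push_neg at h
    choose y hyU hyD using fun n => Set.not_subset.mp (h n)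
    have hy0 : Tendsto y atTop (𝓝 (0:V)) := hUU.tendsto hyU
    obtain ⟨m, hm⟩ := key _ hy0.isCompact_insert_range
    exact hyD m (hm (mem_insert_of_mem _ (mem_range_self m)))
  obtain ⟨n, hn⟩ := hex
  exact aux_fd_of_totallyBounded_nhds V (hUU.toHasBasis.mem_of_mem trivial)
    ((htb n).subset hn)
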